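/- The multiplicative monoid M of polynomials f ∈ ℤ[s] with constant term f(0) = 1 is a free commutative monoid; in particular, its group completion is a free abelian group. -/

import Mathlib

/-- The multiplicative monoid `M` of polynomials `f ∈ ℤ[s]` with constant
term `f(0) = 1`. -/
noncomputable def constTermOne : Submonoid (Polynomial ℤ) where
  carrier := {f : Polynomial ℤ | f.coeff 0 = 1}
  one_mem' := by simp
  mul_mem' := by
    intro a b ha hb
    simp only [Set.mem_setOf_eq, Polynomial.mul_coeff_zero] at *
    rw [ha, hb, mul_one]

open Polynomial

/-- Irreducible polynomials with constant term 1. -/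
abbrev IrrOne : Type := {p : Polynomial ℤ // Irreducible p ∧ p.coeff 0 = 1}

lemma assoc_eq {p q : Polynomial ℤ} (hp : p.coeff 0 = 1) (hq : q.coeff 0 = 1)
    (h : Associated p q) : p = q := by
  obtain ⟨u, hu⟩ := h
  obtain ⟨r, hr, hC⟩ := Polynomial.isUnit_iff.mp u.isUnit
  have h0 : q.coeff 0 = p.coeff 0 * (u : Polynomial ℤ).coeff 0 := by
    rw [← hu, Polynomial.mul_coeff_zero]
  rw [hp, hq, one_mul, ← hC, Polynomial.coeff_C_zero] at h0
  rw [← hu, ← hC, h0.symm, Polynomial.C_1, mul_one]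

noncomputable def Phi : Multiplicative (Multiset IrrOne) →* constTermOne where
  toFun m := ((m.toAdd).map fun p => (⟨p.1, p.2.2⟩ : constTermOne)).prod
  map_one' := by simp
  map_mul' x y := by
    show ((x.toAdd + y.toAdd).map _).prod = _
    rw [Multiset.map_add, Multiset.prod_add]

lemma Phi_coe (m : Multiplicative (Multiset IrrOne)) :
    ((Phi m : constTermOne) : Polynomial ℤ) = ((m.toAdd).map Subtype.val).prod := by
  show ((((m.toAdd).map fun p => (⟨p.1, p.2.2⟩ : constTermOne)).prod :
      constTermOne) : Polynomial ℤ) = _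
  rw [Submonoid.coe_multiset_prod, Multiset.map_map]
  rfl

lemma Phi_inj : Function.Injective Phi := by
  intro m n h
  have h' : ((m.toAdd).map Subtype.val).prod = ((n.toAdd).map Subtype.val).prod := by
    rw [← Phi_coe, ← Phi_coe, h]
  have hrel := UniqueFactorizationMonoid.factors_unique
    (f := (m.toAdd).map Subtype.val) (g := (n.toAdd).map Subtype.val)
    (by rintro x hx; obtain ⟨p, _, rfl⟩ := Multiset.mem_map.mp hx; exact p.2.1)
    (by rintro x hx; obtain ⟨p, _, rfl⟩ := Multiset.mem_map.mp hx; exact p.2.1)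
    (h' ▸ Associated.refl _)
  have heq : (m.toAdd).map Subtype.val = (n.toAdd).map Subtype.val := by
    rw [← Multiset.rel_eq]
    refine hrel.mono ?_
    rintro x hx y hy hxy
    obtain ⟨p, _, rfl⟩ := Multiset.mem_map.mp hx
    obtain ⟨q, _, rfl⟩ := Multiset.mem_map.mp hy
    exact assoc_eq p.2.2 q.2.2 hxy
  have := Multiset.map_injective Subtype.val_injective heq
  exact Multiplicative.toAdd.injective this

lemma Phi_surj : Function.Surjective Phi := by
  intro f
  have key : ∀ a : Polynomial ℤ, IsUnit (a.coeff 0) →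
      ∃ m : Multiset IrrOne, (m.map Subtype.val).prod * C (a.coeff 0) = a := by
    intro a
    refine UniqueFactorizationMonoid.induction_on_prime a ?_ ?_ ?_
    · intro h; simp at h
    · intro x hx _
      obtain ⟨r, hr, hC⟩ := Polynomial.isUnit_iff.mp hx
      refine ⟨0, ?_⟩
      simp [← hC]
    · intro a p ha hp ih hu
      rw [Polynomial.mul_coeff_zero] at hu
      have hpu : IsUnit (p.coeff 0) := isUnit_of_mul_isUnit_left hu
      have hau : IsUnit (a.coeff 0) := isUnit_of_mul_isUnit_right hu
      obtain ⟨m, hm⟩ := ih hau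
      have hpp : p.coeff 0 * p.coeff 0 = 1 := by
        rcases Int.isUnit_iff.mp hpu with h | h <;> rw [h] <;> norm_num
      have hq0 : (C (p.coeff 0) * p).coeff 0 = 1 := by
        rw [Polynomial.mul_coeff_zero, Polynomial.coeff_C_zero, hpp]
      have hqirr : Irreducible (C (p.coeff 0) * p) := by
        have : Associated p (C (p.coeff 0) * p) :=
          (associated_unit_mul_left _ _ (hpu.map Polynomial.C.toMonoidHom)).symm
        exact this.irreducible hp.irreducible
      refine ⟨⟨C (p.coeff 0) * p, hqirr, hq0⟩ ::ₘ m, ?_⟩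
      simp only [Polynomial.mul_coeff_zero]
      rw [Multiset.map_cons, Multiset.prod_cons, map_mul]
      calc C (p.coeff 0) * p * (m.map Subtype.val).prod * (C (p.coeff 0) * C (a.coeff 0))
          = (C (p.coeff 0) * C (p.coeff 0)) *
              (p * ((m.map Subtype.val).prod * C (a.coeff 0))) := by ring
        _ = p * a := by rw [← map_mul, hpp, Polynomial.C_1, one_mul, hm]
  have hf : ((f : Polynomial ℤ)).coeff 0 = 1 := f.2
  obtain ⟨m, hm⟩ := key f (by rw [hf]; exact isUnit_one)
  refine ⟨Multiplicative.ofAdd m, ?_⟩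
  apply Subtype.ext
  rw [Phi_coe]
  simpa [hf] using hm

/-- `M ≅ ⊕ ℕ`, the free commutative monoid on the irreducible polynomials
with constant term 1. -/
noncomputable def eM : constTermOne ≃* Multiplicative (IrrOne →₀ ℕ) := by
  classical
  exact (MulEquiv.ofBijective Phi ⟨Phi_inj, Phi_surj⟩).symm.trans
    (AddEquiv.toMultiplicative (Multiset.toFinsupp (α := IrrOne)))

/-- `Multiplicative (IrrOne →₀ ℤ)` is the localization (group completion) of
`Multiplicative (IrrOne →₀ ℕ)` at everything. -/
noncomputable def locMap : Submonoid.LocalizationMap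
    (⊤ : Submonoid (Multiplicative (IrrOne →₀ ℕ))) (Multiplicative (IrrOne →₀ ℤ)) where
  toMulHom := (AddMonoidHom.toMultiplicative
    (Finsupp.mapRange.addMonoidHom (Nat.castAddMonoidHom ℤ))).toMulHom
  isLocalizationMap.map_units y := Group.isUnit _
  isLocalizationMap.surj z := by
    classical
    refine ⟨⟨Multiplicative.ofAdd ((z.toAdd).mapRange Int.toNat (by simp)),
      ⟨Multiplicative.ofAdd ((-z.toAdd).mapRange Int.toNat (by simp)), trivial⟩⟩, ?_⟩
    apply Multiplicative.toAdd.injective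
    ext a
    simp [Finsupp.mapRange_apply]
    omega
  isLocalizationMap.exists_of_eq {x y} h := by
    refine ⟨1, ?_⟩
    have hx : x.toAdd = y.toAdd :=
      Finsupp.mapRange_injective (α := IrrOne) (Nat.cast : ℕ → ℤ) (by simp)
        Nat.cast_injective h
    simpa using Multiplicative.toAdd.injective hx

/-!
STATEMENT 2: `M` is a free commutative monoid, i.e. it is isomorphic (as a
monoid) to a direct sum of copies of `ℕ`; in particular its group completion
(the localization of `M` at all of `M`) is a free abelian group (isomorphic
to a direct sum of copies of `ℤ`).
-/
theorem stmt_2 :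
    (∃ ι : Type, Nonempty (constTermOne ≃* Multiplicative (ι →₀ ℕ))) ∧
    (∃ κ : Type, Nonempty
      (Localization (⊤ : Submonoid constTermOne) ≃* Multiplicative (κ →₀ ℤ))) := by
  constructor
  · exact ⟨IrrOne, ⟨eM⟩⟩
  · refine ⟨IrrOne, ⟨?_⟩⟩
    refine (Localization.monoidOf (⊤ : Submonoid constTermOne)).mulEquivOfMulEquiv
      locMap (j := eM) ?_
    rw [← MonoidHom.mrange_eq_map]
    exact MonoidHom.mrange_eq_top_of_surjective _ eM.surjective
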